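/- arXiv:2410.23620 — 2 statements merged into one kernel-verified Lean document; each statement's English description precedes it below -/
import Mathlib

section
/- In the Gaussian additive-noise structural causal model over a DAG, if k and l are two distinct leaf nodes, then the cross second derivative of the log-density vanishes identically: ∂²/(∂z_k ∂z_l) log p(z) = 0 for all z. -/
open BigOperators Real

lemma dirZero {n : ℕ} (f : (Fin n → ℝ) → ℝ) (S : Finset (Fin n))
    (hf : ∀ z z' : Fin n → ℝ, (∀ j ∈ S, z j = z' j) → f z = f z')
    (hdiff : Differentiable ℝ f)
    (l : Fin n) (hl : l ∉ S) (y : Fin n → ℝ) : fderiv ℝ f y (Pi.single l 1) = 0 := by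
  set v : Fin n → ℝ := Pi.single l 1 with hv
  have hline : HasDerivAt (fun t : ℝ => y + t • v) v 0 := by
    simpa using ((hasDerivAt_id (0:ℝ)).smul_const v).const_add y
  have h1 : HasDerivAt (fun t : ℝ => f (y + t • v)) (fderiv ℝ f y (Pi.single l 1)) 0 := by
    have h0 : HasFDerivAt f (fderiv ℝ f y) (y + (0:ℝ) • v) := by
      simpa using (hdiff y).hasFDerivAt
    exact h0.comp_hasDerivAt 0 hline
  have h2 : (fun t : ℝ => f (y + t • v)) = fun _ => f y := by
    funext t
    refine hf _ _ ?_
    intro j hj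
    have hjl : j ≠ l := fun h => hl (h ▸ hj)
    simp [hv, Pi.single_apply, hjl]
  rw [h2] at h1
  exact h1.unique (hasDerivAt_const _ _)

/-- In a Gaussian additive-noise structural causal model over a DAG, for two
distinct leaf nodes `k` and `l` the cross second derivative of the log-density
vanishes identically: `∂²/(∂z_k ∂z_l) log p(z) = 0` for all `z`. -/
theorem stmt_13 {n : ℕ}
    (pa : Fin n → Finset (Fin n))        -- parents in the DAG
    (ord : Fin n → ℕ)                    -- topological order witnessing acyclicity
    (hacyc : ∀ i, ∀ j ∈ pa i, ord j < ord i)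
    (f : Fin n → (Fin n → ℝ) → ℝ)
    (hf_smooth : ∀ i, ContDiff ℝ 2 (f i))
    (hf_pa : ∀ i, ∀ z z' : Fin n → ℝ, (∀ j ∈ pa i, z j = z' j) → f i z = f i z')
    (σ : Fin n → ℝ) (hσ : ∀ i, 0 < σ i)
    (p : (Fin n → ℝ) → ℝ)
    (hp : ∀ z, p z = ∏ i, (Real.sqrt (2 * Real.pi * (σ i) ^ 2))⁻¹
        * Real.exp (-(z i - f i z) ^ 2 / (2 * (σ i) ^ 2)))
    (k l : Fin n) (hkl : k ≠ l)
    (hleafk : ∀ i, k ∉ pa i) (hleafl : ∀ i, l ∉ pa i) :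
    ∀ z : Fin n → ℝ,
      fderiv ℝ (fun w => fderiv ℝ (fun y => Real.log (p y)) w (Pi.single l 1)) z
        (Pi.single k 1) = 0 := by
  have hσ2 : ∀ i, (σ i)^2 ≠ 0 := fun i => pow_ne_zero _ (hσ i).ne'
  have hdifff : ∀ i, Differentiable ℝ (f i) :=
    fun i => (hf_smooth i).differentiable (by norm_num)
  -- the log density as a sum
  have hEq : (fun y => Real.log (p y)) =
      (fun y => ∑ i, (Real.log ((Real.sqrt (2 * Real.pi * (σ i) ^ 2))⁻¹) +
        (2 * (σ i)^2)⁻¹ * (-((y i - f i y) * (y i - f i y))))) := by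
    funext y
    rw [hp y]
    rw [Real.log_prod]
    · refine Finset.sum_congr rfl (fun i _ => ?_)
      have hs : 0 < Real.sqrt (2 * Real.pi * (σ i) ^ 2) :=
        Real.sqrt_pos.mpr (by have := hσ i; positivity)
      have hc : (Real.sqrt (2 * Real.pi * (σ i) ^ 2))⁻¹ ≠ 0 := inv_ne_zero hs.ne'
      rw [Real.log_mul hc (Real.exp_ne_zero _), Real.log_exp]
      ring
    · intro i _
      have hs : 0 < Real.sqrt (2 * Real.pi * (σ i) ^ 2) :=
        Real.sqrt_pos.mpr (by have := hσ i; positivity)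
      exact mul_ne_zero (inv_ne_zero hs.ne') (Real.exp_ne_zero _)
  -- first directional derivative
  have key : ∀ w : Fin n → ℝ,
      fderiv ℝ (fun y => Real.log (p y)) w (Pi.single l 1)
        = -(w l - f l w) / (σ l)^2 := by
    intro w
    have hG : ∀ i, HasFDerivAt (fun y : Fin n → ℝ => y i - f i y)
        (ContinuousLinearMap.proj i - fderiv ℝ (f i) w) w :=
      fun i => (ContinuousLinearMap.proj i).hasFDerivAt.sub ((hdifff i) w).hasFDerivAt
    have hterm : ∀ i ∈ Finset.univ, HasFDerivAt
        (fun y : Fin n → ℝ => Real.log ((Real.sqrt (2 * Real.pi * (σ i) ^ 2))⁻¹) +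
          (2 * (σ i)^2)⁻¹ * (-((y i - f i y) * (y i - f i y))))
        ((2 * (σ i)^2)⁻¹ • (-((w i - f i w) • (ContinuousLinearMap.proj i - fderiv ℝ (f i) w) +
            (w i - f i w) • (ContinuousLinearMap.proj i - fderiv ℝ (f i) w)))) w := by
      intro i _
      exact ((((hG i).mul (hG i)).neg).const_mul _).const_add _
    have hsum := HasFDerivAt.fun_sum hterm
    rw [hEq, hsum.fderiv]
    have hz : ∀ i, fderiv ℝ (f i) w (Pi.single l 1) = 0 :=
      fun i => dirZero (f i) (pa i) (hf_pa i) (hdifff i) l (hleafl i) w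
    rw [ContinuousLinearMap.sum_apply]
    rw [Finset.sum_eq_single l]
    · simp [hz, ContinuousLinearMap.proj_apply, Pi.single_apply]
      field_simp
      ring
    · intro i _ hil
      simp [hz, ContinuousLinearMap.proj_apply, Pi.single_apply, Ne.symm hil]
    · simp
  have hcong : (fun w => fderiv ℝ (fun y => Real.log (p y)) w (Pi.single l 1)) =
      (fun w : Fin n → ℝ => -(w l - f l w) / (σ l)^2) := funext key
  intro z
  rw [hcong]
  have hD : HasFDerivAt (fun w : Fin n → ℝ => -(w l - f l w) / (σ l)^2)
      (((σ l)^2)⁻¹ • (-(ContinuousLinearMap.proj l - fderiv ℝ (f l) z))) z := by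
    have h1 : HasFDerivAt (fun y : Fin n → ℝ => y l - f l y)
        (ContinuousLinearMap.proj l - fderiv ℝ (f l) z) z :=
      (ContinuousLinearMap.proj l).hasFDerivAt.sub ((hdifff l) z).hasFDerivAt
    have := (h1.fun_neg).const_mul (((σ l)^2)⁻¹)
    have heq : (fun w : Fin n → ℝ => ((σ l)^2)⁻¹ * (-(w l - f l w))) =
        (fun w : Fin n → ℝ => -(w l - f l w) / (σ l)^2) := by
      funext w; ring
    rwa [heq] at this
  rw [hD.fderiv]
  have hzk : fderiv ℝ (f l) z (Pi.single k 1) = 0 :=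
    dirZero (f l) (pa l) (hf_pa l) (hdifff l) k (hleafk l) z
  simp [hzk, ContinuousLinearMap.proj_apply, Pi.single_apply, hkl]
end

section
/- In the Gaussian additive-noise structural causal model, if k is a leaf node of the DAG G, then the k-th diagonal entry of the Hessian of the log-density is the constant −1/σ_k²; in particular, Var(∂²/∂z_k² log p(Z)) = 0. -/
open BigOperators Real MeasureTheory ProbabilityTheory

/-- In a Gaussian additive-noise structural causal model over a DAG, if `k` is
a leaf node then the `k`-th diagonal entry of the Hessian of the log-density is
the constant `−1/σ_k²`; in particular its variance under any probability
measure is zero. -/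
theorem stmt_14 {n : ℕ}
    (pa : Fin n → Finset (Fin n))        -- parents in the DAG
    (ord : Fin n → ℕ)                    -- topological order witnessing acyclicity
    (hacyc : ∀ i, ∀ j ∈ pa i, ord j < ord i)
    (f : Fin n → (Fin n → ℝ) → ℝ)
    (hf_smooth : ∀ i, ContDiff ℝ 2 (f i))
    (hf_pa : ∀ i, ∀ z z' : Fin n → ℝ, (∀ j ∈ pa i, z j = z' j) → f i z = f i z')
    (σ : Fin n → ℝ) (hσ : ∀ i, 0 < σ i)
    (p : (Fin n → ℝ) → ℝ)
    (hp : ∀ z, p z = ∏ i, (Real.sqrt (2 * Real.pi * (σ i) ^ 2))⁻¹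
        * Real.exp (-(z i - f i z) ^ 2 / (2 * (σ i) ^ 2)))
    (k : Fin n) (hleaf : ∀ i, k ∉ pa i) :
    (∀ z : Fin n → ℝ,
        fderiv ℝ (fun w => fderiv ℝ (fun y => Real.log (p y)) w (Pi.single k 1)) z
          (Pi.single k 1) = -(1 / (σ k) ^ 2))
      ∧ ∀ μ : Measure (Fin n → ℝ), IsProbabilityMeasure μ →
          variance (fun z =>
            fderiv ℝ (fun w => fderiv ℝ (fun y => Real.log (p y)) w (Pi.single k 1)) z
              (Pi.single k 1)) μ = 0 := by
  have hσk : (σ k) ≠ 0 := (hσ k).ne'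
  -- coordinates off k are unchanged along the direction `Pi.single k 1`
  have hvk : ∀ (w : Fin n → ℝ) (t : ℝ) (i : Fin n), i ≠ k →
      (w + t • (Pi.single k 1 : Fin n → ℝ)) i = w i := by
    intro w t i hi
    simp [Pi.single_apply, hi]
  have hvkk : ∀ (w : Fin n → ℝ) (t : ℝ), (w + t • (Pi.single k 1 : Fin n → ℝ)) k = w k + t := by
    intro w t; simp
  have hfconst : ∀ (i : Fin n) (w : Fin n → ℝ) (t : ℝ),
      f i (w + t • (Pi.single k 1 : Fin n → ℝ)) = f i w := by
    intro i w t
    exact hf_pa i _ _ (fun j hj => hvk w t j (fun h => hleaf i (h ▸ hj)))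
  -- directional derivative as a one-dimensional derivative
  have hdir : ∀ (g : (Fin n → ℝ) → ℝ) (w : Fin n → ℝ), DifferentiableAt ℝ g w →
      fderiv ℝ g w (Pi.single k 1) = deriv (fun t : ℝ => g (w + t • (Pi.single k 1 : Fin n → ℝ))) 0 := by
    intro g w hg
    have hline : HasDerivAt (fun t : ℝ => w + t • (Pi.single k 1 : Fin n → ℝ))
        (Pi.single k 1) 0 := by
      simpa using ((hasDerivAt_id (0:ℝ)).smul_const (Pi.single k 1 : Fin n → ℝ)).const_add w
    have hg' : HasFDerivAt g (fderiv ℝ g w)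
        ((fun t : ℝ => w + t • (Pi.single k 1 : Fin n → ℝ)) 0) := by
      simpa using hg.hasFDerivAt
    have h2 := hg'.comp_hasDerivAt 0 hline
    exact (h2.deriv).symm
  -- explicit formula for the log-density
  set c : Fin n → ℝ := fun i => Real.log (Real.sqrt (2 * Real.pi * (σ i) ^ 2))⁻¹ with hc
  have hL : (fun y => Real.log (p y)) =
      fun z : Fin n → ℝ => ∑ i, (c i + (-(z i - f i z) ^ 2 / (2 * (σ i) ^ 2))) := by
    funext z
    rw [hp z, Real.log_prod]
    · refine Finset.sum_congr rfl fun i _ => ?_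
      have h2 : (0:ℝ) < 2 * Real.pi * (σ i) ^ 2 :=
        mul_pos (mul_pos two_pos Real.pi_pos) (pow_pos (hσ i) 2)
      rw [Real.log_mul (inv_ne_zero (ne_of_gt (Real.sqrt_pos.mpr h2)))
        (Real.exp_ne_zero _), Real.log_exp]
    · intro i _
      have h2 : (0:ℝ) < 2 * Real.pi * (σ i) ^ 2 :=
        mul_pos (mul_pos two_pos Real.pi_pos) (pow_pos (hσ i) 2)
      exact mul_ne_zero (inv_ne_zero (ne_of_gt (Real.sqrt_pos.mpr h2)))
        (Real.exp_ne_zero _)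
  have hfi : ∀ (i : Fin n) (w : Fin n → ℝ), DifferentiableAt ℝ (f i) w :=
    fun i w => ((hf_smooth i).differentiable (by norm_num)) w
  have hproj : ∀ (i : Fin n) (w : Fin n → ℝ),
      DifferentiableAt ℝ (fun z : Fin n → ℝ => z i) w := by
    intro i w
    exact (ContinuousLinearMap.proj i : ((Fin n) → ℝ) →L[ℝ] ℝ).differentiable w
  have hdiffL : ∀ w : Fin n → ℝ, DifferentiableAt ℝ
      (fun z : Fin n → ℝ => ∑ i, (c i + (-(z i - f i z) ^ 2 / (2 * (σ i) ^ 2)))) w := by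
    intro w
    refine DifferentiableAt.fun_sum fun i _ => ?_
    have hfd : Differentiable ℝ (f i) := (hf_smooth i).differentiable (by norm_num)
    fun_prop
  -- first directional derivative
  have h1 : ∀ w : Fin n → ℝ,
      fderiv ℝ (fun y => Real.log (p y)) w (Pi.single k 1)
        = -(w k - f k w) / (σ k) ^ 2 := by
    intro w
    rw [hL, hdir _ w (hdiffL w)]
    have hfun : (fun t : ℝ => ∑ i, (c i +
        (-((w + t • (Pi.single k 1 : Fin n → ℝ)) i - f i (w + t • (Pi.single k 1 : Fin n → ℝ))) ^ 2 / (2 * (σ i) ^ 2))))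
        = fun t : ℝ =>
          (∑ i ∈ Finset.univ.erase k, (c i + (-(w i - f i w) ^ 2 / (2 * (σ i) ^ 2))))
          + (c k + (-((w k + t) - f k w) ^ 2 / (2 * (σ k) ^ 2))) := by
      funext t
      rw [← Finset.sum_erase_add _ _ (Finset.mem_univ k)]
      congr 1
      · refine Finset.sum_congr rfl fun i hi => ?_
        rw [hfconst, hvk w t i (Finset.ne_of_mem_erase hi)]
      · rw [hfconst, hvkk]
    rw [hfun]
    have h0 : HasDerivAt (fun t : ℝ => (w k + t) - f k w) 1 0 :=
      ((hasDerivAt_id (0:ℝ)).const_add (w k)).sub_const (f k w)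
    have hd := ((((h0.pow 2).neg).div_const (2 * (σ k) ^ 2)).const_add (c k)).const_add
      (∑ i ∈ Finset.univ.erase k, (c i + (-(w i - f i w) ^ 2 / (2 * (σ i) ^ 2))))
    have hd' : HasDerivAt (fun t : ℝ =>
        (∑ i ∈ Finset.univ.erase k, (c i + (-(w i - f i w) ^ 2 / (2 * (σ i) ^ 2))))
        + (c k + (-((w k + t) - f k w) ^ 2 / (2 * (σ k) ^ 2))))
        (-(w k - f k w) / (σ k) ^ 2) 0 := by
      refine hd.congr_deriv ?_
      push_cast
      field_simp
      ring
    exact hd'.deriv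
  -- the first derivative as a function
  have hfun1 : (fun w => fderiv ℝ (fun y => Real.log (p y)) w (Pi.single k 1))
      = fun w : Fin n → ℝ => -(w k - f k w) / (σ k) ^ 2 := funext h1
  -- second directional derivative
  have h2 : ∀ z : Fin n → ℝ,
      fderiv ℝ (fun w => fderiv ℝ (fun y => Real.log (p y)) w (Pi.single k 1)) z
        (Pi.single k 1) = -(1 / (σ k) ^ 2) := by
    intro z
    rw [hfun1]
    have hdiff2 : DifferentiableAt ℝ
        (fun w : Fin n → ℝ => -(w k - f k w) / (σ k) ^ 2) z := by
      have hfd : Differentiable ℝ (f k) := (hf_smooth k).differentiable (by norm_num)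
      fun_prop
    rw [hdir _ z hdiff2]
    have hfun2 : (fun t : ℝ =>
        -((z + t • (Pi.single k 1 : Fin n → ℝ)) k - f k (z + t • (Pi.single k 1 : Fin n → ℝ))) / (σ k) ^ 2)
        = fun t : ℝ => -((z k + t) - f k z) / (σ k) ^ 2 := by
      funext t
      rw [hfconst, hvkk]
    rw [hfun2]
    have h0 : HasDerivAt (fun t : ℝ => (z k + t) - f k z) 1 0 :=
      ((hasDerivAt_id (0:ℝ)).const_add (z k)).sub_const (f k z)
    have hd : HasDerivAt (fun t : ℝ => -((z k + t) - f k z) / (σ k) ^ 2)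
        (-(1 / (σ k) ^ 2)) 0 := by
      refine ((h0.neg).div_const ((σ k) ^ 2)).congr_deriv ?_
      ring
    exact hd.deriv
  refine ⟨h2, ?_⟩
  intro μ hμ
  have hconst : (fun z : Fin n → ℝ =>
      fderiv ℝ (fun w => fderiv ℝ (fun y => Real.log (p y)) w (Pi.single k 1)) z
        (Pi.single k 1)) = fun _ => -(1 / (σ k) ^ 2) := funext h2
  rw [hconst]
  simp [ProbabilityTheory.variance, ProbabilityTheory.evariance, integral_const,
    measure_univ]
end
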